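/- Every ℝ-algebra automorphism f of 𝔹ℂ satisfies f⁴ = id; consequently there are exactly eight automorphisms f with f⁴ = id, and exactly two of them have exact order 4. -/

import Mathlib

noncomputable section

/-- The bicomplex numbers, modeled via their idempotent representation as `ℂ × ℂ`
(componentwise addition and multiplication). -/
abbrev BC : Type := ℂ × ℂ

namespace BC

/-- The imaginary unit `i₁`. -/
def i1 : BC := (Complex.I, Complex.I)

/-- The imaginary unit `i₂`. -/
def i2 : BC := (-Complex.I, Complex.I)

/-- The hyperbolic unit `j₁ = i₁ i₂`. -/
def j1 : BC := (1, -1)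

/-- The idempotent `e₁ = (1 + j₁)/2`. -/
def e1 : BC := (1, 0)

/-- The idempotent `e₂ = (1 - j₁)/2`. -/
def e2 : BC := (0, 1)

/-- The embedding of `ℂ(i₁)` into the bicomplex numbers. -/
def C (z : ℂ) : BC := (z, z)

end BC

open BC

namespace BCAux

open Complex

def co (a : Bool) : ℂ ≃ₐ[ℝ] ℂ := if a then Complex.conjAe else AlgEquiv.refl

@[simp] lemma co_false (z : ℂ) : co false z = z := rfl
@[simp] lemma co_true (z : ℂ) : co true z = (starRingEnd ℂ) z := rfl

def aut (s a b : Bool) : BC ≃ₐ[ℝ] BC where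
  toFun p := if s then (co b p.2, co a p.1) else (co a p.1, co b p.2)
  invFun p := if s then ((co a).symm p.2, (co b).symm p.1)
    else ((co a).symm p.1, (co b).symm p.2)
  left_inv p := by cases s <;> simp
  right_inv p := by cases s <;> simp
  map_mul' p q := by
    cases s <;> simp [Prod.fst_mul, Prod.snd_mul, Prod.mk_mul_mk]
  map_add' p q := by
    cases s <;> simp [Prod.fst_add, Prod.snd_add, Prod.mk_add_mk]
  commutes' r := by
    cases s <;> cases a <;> cases b <;>
      simp [Prod.algebraMap_apply, Complex.conj_ofReal]

@[simp] lemma aut_apply (s a b : Bool) (p : BC) :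
    aut s a b p = if s then (co b p.2, co a p.1) else (co a p.1, co b p.2) := rfl

lemma ext_of (f g : BC ≃ₐ[ℝ] BC) (h1 : f e1 = g e1)
    (h2 : f ((Complex.I, Complex.I) : BC) = g ((Complex.I, Complex.I) : BC)) : f = g := by
  have key : ∀ (h : BC ≃ₐ[ℝ] BC) (p : BC),
      h p = (p.1.re • (1:BC) + p.1.im • h ((Complex.I, Complex.I) : BC)) * h e1
        + (p.2.re • (1:BC) + p.2.im • h ((Complex.I, Complex.I) : BC)) * (1 - h e1) := by
    intro h p
    have hp : p = (p.1.re • (1:BC) + p.1.im • ((Complex.I, Complex.I) : BC)) * e1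
        + (p.2.re • (1:BC) + p.2.im • ((Complex.I, Complex.I) : BC)) * (1 - e1) := by
      apply Prod.ext <;>
        simp [e1, Prod.fst_mul, Prod.snd_mul, Prod.fst_add, Prod.snd_add,
          Complex.real_smul, Complex.re_add_im]
    conv_lhs => rw [hp]
    simp only [map_add, map_mul, map_sub, map_one, map_smul]
  apply AlgEquiv.ext
  intro p
  rw [key f p, key g p, h1, h2]

lemma idem_cases (x : ℂ) (h : x * x = x) : x = 0 ∨ x = 1 := by
  have h0 : x * (x - 1) = 0 := by linear_combination h
  rcases mul_eq_zero.mp h0 with h' | h'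
  · exact Or.inl h'
  · exact Or.inr (sub_eq_zero.mp h')

lemma sqI_cases (x : ℂ) (h : x * x = -1) : x = Complex.I ∨ x = -Complex.I := by
  have h0 : (x - Complex.I) * (x + Complex.I) = 0 := by
    linear_combination h - Complex.I_mul_I
  rcases mul_eq_zero.mp h0 with h' | h'
  · exact Or.inl (sub_eq_zero.mp h')
  · exact Or.inr (eq_neg_of_add_eq_zero_left h')

lemma classify (f : BC ≃ₐ[ℝ] BC) : ∃ s a b, f = aut s a b := by
  have he : f e1 * f e1 = f e1 := by
    rw [← map_mul]
    norm_num [e1, Prod.mk_mul_mk]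
  have hImul : ((Complex.I, Complex.I) : BC) * (Complex.I, Complex.I) = -1 := by
    have : (-1 : BC) = ((-1 : ℂ), (-1 : ℂ)) := rfl
    rw [this, Prod.mk_mul_mk, Complex.I_mul_I]
  have hI : f ((Complex.I, Complex.I) : BC) * f ((Complex.I, Complex.I) : BC) = -1 := by
    rw [← map_mul, hImul, map_neg, map_one]
  have h1 := idem_cases (f e1).1 (by simpa [Prod.fst_mul] using congrArg Prod.fst he)
  have h2 := idem_cases (f e1).2 (by simpa [Prod.snd_mul] using congrArg Prod.snd he)
  have hi1 := sqI_cases (f ((Complex.I, Complex.I) : BC)).1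
    (by simpa [Prod.fst_mul] using congrArg Prod.fst hI)
  have hi2 := sqI_cases (f ((Complex.I, Complex.I) : BC)).2
    (by simpa [Prod.snd_mul] using congrArg Prod.snd hI)
  have he1 : f e1 = e1 ∨ f e1 = e2 := by
    rcases h1 with h1 | h1 <;> rcases h2 with h2 | h2
    · exfalso
      have h0 : f e1 = f 0 := by
        rw [map_zero]
        exact Prod.ext_iff.mpr ⟨h1, h2⟩
      have := f.injective h0
      simp [e1, Prod.ext_iff] at this
    · exact Or.inr (Prod.ext_iff.mpr ⟨h1, h2⟩)
    · exact Or.inl (Prod.ext_iff.mpr ⟨h1, h2⟩)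
    · exfalso
      have h0 : f e1 = f 1 := by
        rw [map_one]
        exact Prod.ext_iff.mpr ⟨h1, h2⟩
      have := f.injective h0
      simp [e1, Prod.ext_iff] at this
  rcases he1 with h | h <;> rcases hi1 with hA | hA <;> rcases hi2 with hB | hB
  · exact ⟨false, false, false, ext_of _ _ (by rw [h]; simp [e1, e2])
      (by refine Prod.ext_iff.mpr ⟨?_, ?_⟩ <;> simp [hA, hB])⟩
  · exact ⟨false, false, true, ext_of _ _ (by rw [h]; simp [e1, e2])
      (by refine Prod.ext_iff.mpr ⟨?_, ?_⟩ <;> simp [hA, hB])⟩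
  · exact ⟨false, true, false, ext_of _ _ (by rw [h]; simp [e1, e2])
      (by refine Prod.ext_iff.mpr ⟨?_, ?_⟩ <;> simp [hA, hB])⟩
  · exact ⟨false, true, true, ext_of _ _ (by rw [h]; simp [e1, e2])
      (by refine Prod.ext_iff.mpr ⟨?_, ?_⟩ <;> simp [hA, hB])⟩
  · exact ⟨true, false, false, ext_of _ _ (by rw [h]; simp [e1, e2])
      (by refine Prod.ext_iff.mpr ⟨?_, ?_⟩ <;> simp [hA, hB])⟩
  · exact ⟨true, true, false, ext_of _ _ (by rw [h]; simp [e1, e2])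
      (by refine Prod.ext_iff.mpr ⟨?_, ?_⟩ <;> simp [hA, hB])⟩
  · exact ⟨true, false, true, ext_of _ _ (by rw [h]; simp [e1, e2])
      (by refine Prod.ext_iff.mpr ⟨?_, ?_⟩ <;> simp [hA, hB])⟩
  · exact ⟨true, true, true, ext_of _ _ (by rw [h]; simp [e1, e2])
      (by refine Prod.ext_iff.mpr ⟨?_, ?_⟩ <;> simp [hA, hB])⟩

lemma four (s a b : Bool) (p : BC) :
    aut s a b (aut s a b (aut s a b (aut s a b p))) = p := by
  cases s <;> cases a <;> cases b <;> simp

lemma pow4 (f : BC ≃ₐ[ℝ] BC) : f ^ 4 = 1 := by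
  obtain ⟨s, a, b, rfl⟩ := classify f
  apply AlgEquiv.ext
  intro p
  have h : (aut s a b ^ 4) p = aut s a b (aut s a b (aut s a b (aut s a b p))) := by
    simp only [pow_succ, pow_zero, one_mul, AlgEquiv.mul_apply]
  rw [h, four]
  rfl

lemma part1 : ∀ f : BC ≃ₐ[ℝ] BC, ∀ s, (⇑f)^[4] s = s := by
  intro f p
  obtain ⟨s, a, b, rfl⟩ := classify f
  show aut s a b (aut s a b (aut s a b (aut s a b p))) = p
  exact four s a b p

lemma inj : Function.Injective
    (fun t : Bool × Bool × Bool => aut t.1 t.2.1 t.2.2) := by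
  rintro ⟨s, a, b⟩ ⟨s', a', b'⟩ h
  simp only at h
  cases s <;> cases s' <;> cases a <;> cases a' <;> cases b <;> cases b' <;>
    first
      | rfl
      | (exfalso
         have h1 := congrArg (fun g : BC ≃ₐ[ℝ] BC => g e1) h
         have h2 := congrArg (fun g : BC ≃ₐ[ℝ] BC => g ((Complex.I, Complex.I) : BC)) h
         revert h1 h2
         norm_num [e1, Prod.ext_iff, Complex.ext_iff])

lemma cardG : Nat.card (BC ≃ₐ[ℝ] BC) = 8 := by
  have hb : Function.Bijective (fun t : Bool × Bool × Bool => aut t.1 t.2.1 t.2.2) := by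
    refine ⟨inj, fun f => ?_⟩
    obtain ⟨s, a, b, hf⟩ := classify f
    exact ⟨(s, a, b), hf.symm⟩
  rw [← Nat.card_eq_of_bijective _ hb, Nat.card_eq_fintype_card]
  decide

lemma ord_ne_of_sq (f : BC ≃ₐ[ℝ] BC) (h : f ^ 2 = 1) : orderOf f ≠ 4 := by
  intro h4
  have hd := orderOf_dvd_of_pow_eq_one h
  rw [h4] at hd
  norm_num at hd

lemma ordA : orderOf (aut true true false) = 4 := by
  have h2 : ¬ (aut true true false) ^ 2 ^ 1 = 1 := by
    intro h
    have := congrArg (fun g : BC ≃ₐ[ℝ] BC => g ((Complex.I, Complex.I) : BC)) h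
    simp only [pow_succ, pow_zero, one_mul, AlgEquiv.mul_apply] at this
    norm_num [Prod.ext_iff, Complex.ext_iff] at this
  have h4 : (aut true true false) ^ 2 ^ (1 + 1) = 1 := by
    norm_num
    exact pow4 _
  have := orderOf_eq_prime_pow h2 h4
  norm_num at this
  exact this

lemma ordB : orderOf (aut true false true) = 4 := by
  have h2 : ¬ (aut true false true) ^ 2 ^ 1 = 1 := by
    intro h
    have := congrArg (fun g : BC ≃ₐ[ℝ] BC => g ((Complex.I, Complex.I) : BC)) h
    simp only [pow_succ, pow_zero, one_mul, AlgEquiv.mul_apply] at this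
    norm_num [Prod.ext_iff, Complex.ext_iff] at this
  have h4 : (aut true false true) ^ 2 ^ (1 + 1) = 1 := by
    norm_num
    exact pow4 _
  have := orderOf_eq_prime_pow h2 h4
  norm_num at this
  exact this

lemma hABne : aut true true false ≠ aut true false true := by
  intro h
  have := congrArg (fun g : BC ≃ₐ[ℝ] BC => g ((Complex.I, Complex.I) : BC)) h
  norm_num [Prod.ext_iff, Complex.ext_iff] at this

lemma setEq : {f : BC ≃ₐ[ℝ] BC | orderOf f = 4}
    = {aut true true false, aut true false true} := by
  ext f
  simp only [Set.mem_setOf_eq, Set.mem_insert_iff, Set.mem_singleton_iff]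
  constructor
  · intro hf
    obtain ⟨s, a, b, rfl⟩ := classify f
    cases s <;> cases a <;> cases b <;>
      first
        | (left; rfl)
        | (right; rfl)
        | (exact absurd hf (ord_ne_of_sq _ (by
            apply AlgEquiv.ext
            intro p
            simp only [pow_succ, pow_zero, one_mul, AlgEquiv.mul_apply]
            simp)))
  · rintro (rfl | rfl)
    · exact ordA
    · exact ordB

end BCAux

open BCAux

theorem stmt_13 :
    (∀ f : BC ≃ₐ[ℝ] BC, ∀ s, (⇑f)^[4] s = s) ∧
    Nat.card {f : BC ≃ₐ[ℝ] BC // ∀ s, (⇑f)^[4] s = s} = 8 ∧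
    Nat.card {f : BC ≃ₐ[ℝ] BC // orderOf f = 4} = 2 := by
  refine ⟨part1, ?_, ?_⟩
  · rw [Nat.card_congr (Equiv.subtypeUnivEquiv part1)]
    exact cardG
  · have h : Nat.card {f : BC ≃ₐ[ℝ] BC // orderOf f = 4}
        = Nat.card {f : BC ≃ₐ[ℝ] BC | orderOf f = 4} := rfl
    rw [h, Nat.card_coe_set_eq, setEq, Set.ncard_pair hABne]
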